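/- arXiv:1908.00305 — 6 statements merged into one kernel-verified Lean document; each statement's English description precedes it below -/
import Mathlib

section
/- Let f : C → ℝ be a convex function, α > 0 and y ∈ Δ°. Suppose x* attains the minimum of x ↦ f(x) + α·D(x,y) over Δ and x* ∈ Δ°. Then for every z ∈ Δ one has f(x*) + α·D(x*,y) ≤ f(z) + α·D(z,y) − α·D(z,x*). -/
open scoped RealInnerProductSpace

/-- Bregman divergence `D(x,y) = ω(x) - ω(y) - ⟪∇ω(y), x - y⟫` generated by `φ`
with gradient map `gφ`. -/
noncomputable def breg {d : ℕ} (φ : EuclideanSpace ℝ (Fin d) → ℝ)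
    (gφ : EuclideanSpace ℝ (Fin d) → EuclideanSpace ℝ (Fin d))
    (x y : EuclideanSpace ℝ (Fin d)) : ℝ :=
  φ x - φ y - ⟪gφ y, x - y⟫

/-- **Pushback property of Bregman divergences.**
If `x*` minimizes `x ↦ f(x) + α·D(x,y)` over `Δ` and `x* ∈ Δ° = Δ ∩ int C`, then for
every `z ∈ Δ` one has `f(x*) + α·D(x*,y) ≤ f(z) + α·D(z,y) − α·D(z,x*)`. -/
theorem pushback_bregman {d : ℕ}
    (C : Set (EuclideanSpace ℝ (Fin d))) (hCconv : Convex ℝ C)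
    (hCint : (interior C).Nonempty)
    (φ : EuclideanSpace ℝ (Fin d) → ℝ)
    (gφ : EuclideanSpace ℝ (Fin d) → EuclideanSpace ℝ (Fin d))
    (hgrad : ∀ y ∈ interior C, HasGradientAt φ (gφ y) y)
    (hgcont : ContinuousOn gφ (interior C))
    (Δ : Set (EuclideanSpace ℝ (Fin d))) (hΔC : Δ ⊆ C)
    (hΔcomp : IsCompact Δ) (hΔconv : Convex ℝ Δ)
    (hΔo : (Δ ∩ interior C).Nonempty)
    (f : EuclideanSpace ℝ (Fin d) → ℝ) (hf : ConvexOn ℝ C f)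
    (α : ℝ) (hα : 0 < α)
    (y : EuclideanSpace ℝ (Fin d)) (hy : y ∈ Δ ∩ interior C)
    (xstar : EuclideanSpace ℝ (Fin d)) (hxstar : xstar ∈ Δ ∩ interior C)
    (hmin : IsMinOn (fun x => f x + α * breg φ gφ x y) Δ xstar) :
    ∀ z ∈ Δ, f xstar + α * breg φ gφ xstar y
      ≤ f z + α * breg φ gφ z y - α * breg φ gφ z xstar := by
  obtain ⟨hxΔ, hxint⟩ := hxstar
  intro z hz
  set v := z - xstar with hv
  -- derivative of the line restriction of φ at x*
  have hgx : HasGradientAt φ (gφ xstar) xstar := hgrad xstar hxint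
  have hc : HasDerivAt (fun t : ℝ => xstar + t • v) v 0 := by
    simpa using ((hasDerivAt_id (0:ℝ)).smul_const v).const_add xstar
  have hline : HasDerivAt (fun t : ℝ => φ (xstar + t • v)) ⟪gφ xstar, v⟫ 0 := by
    have hgx' : HasFDerivAt φ ((InnerProductSpace.toDual ℝ (EuclideanSpace ℝ (Fin d))) (gφ xstar))
        (xstar + (0:ℝ) • v) := by simpa using hgx.hasFDerivAt
    have h1 := hgx'.comp_hasDerivAt 0 hc
    simp at h1; exact h1
  -- the difference quotient tends to the directional derivative
  have hslope : Filter.Tendsto (fun t : ℝ => (φ (xstar + t • v) - φ xstar) / t)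
      (nhdsWithin 0 (Set.Ioi 0)) (nhds ⟪gφ xstar, v⟫) := by
    have h2 := hasDerivAt_iff_tendsto_slope.mp hline
    have h3 : nhdsWithin (0:ℝ) (Set.Ioi 0) ≤ nhdsWithin 0 {(0:ℝ)}ᶜ :=
      nhdsWithin_mono _ (fun t ht => ne_of_gt ht)
    have h4 := h2.mono_left h3
    refine h4.congr' ?_
    filter_upwards [self_mem_nhdsWithin] with t ht
    simp [slope, (Set.mem_Ioi.mp ht).ne', div_eq_inv_mul]
  -- key inequality along the segment
  have hkey : ∀ᶠ t in nhdsWithin (0:ℝ) (Set.Ioi 0),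
      f xstar - f z + α * ⟪gφ y, v⟫ ≤ α * ((φ (xstar + t • v) - φ xstar) / t) := by
    have hIoo : Set.Ioo (0:ℝ) 1 ∈ nhdsWithin (0:ℝ) (Set.Ioi 0) :=
      Ioo_mem_nhdsGT_of_mem (by simp)
    filter_upwards [hIoo] with t ht
    obtain ⟨ht0, ht1⟩ := ht
    have hxt : xstar + t • v ∈ Δ := by
      have := hΔconv hxΔ hz (by linarith : (0:ℝ) ≤ 1 - t) ht0.le (by ring)
      convert this using 1
      simp only [hv]
      module
    have hconvf : f (xstar + t • v) ≤ (1 - t) * f xstar + t * f z := by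
      have h := hf.2 (hΔC hxΔ) (hΔC hz) (by linarith : (0:ℝ) ≤ 1 - t) ht0.le (by ring)
      calc f (xstar + t • v) = f ((1 - t) • xstar + t • z) := by
            congr 1; simp only [hv]; module
        _ ≤ (1 - t) * f xstar + t * f z := by simpa using h
    have hm := hmin hxt
    simp only [breg, Set.mem_setOf_eq] at hm
    have hinner : ⟪gφ y, xstar + t • v - y⟫ = ⟪gφ y, xstar - y⟫ + t * ⟪gφ y, v⟫ := by
      have h : xstar + t • v - y = (xstar - y) + t • v := by module
      rw [h, inner_add_right, real_inner_smul_right]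
    rw [hinner] at hm
    rw [mul_div_assoc', le_div_iff₀ ht0]
    nlinarith [hm, hconvf]
  have hlim : f xstar - f z + α * ⟪gφ y, v⟫ ≤ α * ⟪gφ xstar, v⟫ :=
    ge_of_tendsto (hslope.const_mul α) hkey
  have e1 : ⟪gφ y, z - y⟫ = ⟪gφ y, xstar - y⟫ + ⟪gφ y, v⟫ := by
    rw [← inner_add_right]; congr 1; module
  simp only [breg, ← hv]
  rw [e1]
  nlinarith [hlim]
end

section
/- Let f : C → ℝ be a convex function, α > 0 and y ∈ Δ°. Suppose x* attains the minimum of x ↦ f(x) + α·D(x,y) over Δ and x* ∈ Δ°. Then there exists a subgradient p of f at x* (i.e. f(u) ≥ f(x*) + ⟨p, u − x*⟩ for all u ∈ C) such that ⟨p + α·∇ω(x*) − α·∇ω(y), z − x*⟩ ≥ 0 for every z ∈ Δ. -/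
open scoped RealInnerProductSpace
set_option maxHeartbeats 1000000
open Set Filter Topology

open scoped RealInnerProductSpace
open Set

lemma subgrad_min_aux {d : ℕ}
    (C : Set (EuclideanSpace ℝ (Fin d))) (hCconv : Convex ℝ C)
    (Δ : Set (EuclideanSpace ℝ (Fin d))) (hΔC : Δ ⊆ C) (hΔconv : Convex ℝ Δ)
    (G : EuclideanSpace ℝ (Fin d) → ℝ) (hG : ConvexOn ℝ C G)
    (xstar : EuclideanSpace ℝ (Fin d)) (hxΔ : xstar ∈ Δ) (hxI : xstar ∈ interior C)
    (hmin : ∀ z ∈ Δ, G xstar ≤ G z) :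
    ∃ a : EuclideanSpace ℝ (Fin d),
      (∀ u ∈ C, G xstar + ⟪a, u - xstar⟫ ≤ G u) ∧ ∀ z ∈ Δ, 0 ≤ ⟪a, z - xstar⟫ := by
  classical
  have hxC : xstar ∈ C := interior_subset hxI
  have hGI : ConvexOn ℝ (interior C) (fun x => G x + (-(G xstar))) :=
    (hG.subset interior_subset hCconv.interior).add_const _
  have hGc : ContinuousOn G (interior C) :=
    (hG.subset interior_subset hCconv.interior).continuousOn isOpen_interior
  set S : Set (EuclideanSpace ℝ (Fin d) × ℝ) :=
    { p | p.1 ∈ interior C ∧ G p.1 + (-(G xstar)) < p.2 } with hSdef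
  have hSconv : Convex ℝ S := hGI.convex_strict_epigraph
  have hSopen : IsOpen S := by
    have heq : S = (interior C ×ˢ (univ : Set ℝ)) ∩
        (fun p : EuclideanSpace ℝ (Fin d) × ℝ => p.2 - G p.1) ⁻¹' Ioi (-(G xstar)) := by
      ext p
      constructor
      · rintro ⟨h1, h2⟩
        exact ⟨⟨h1, trivial⟩, by simp only [mem_preimage, mem_Ioi]; linarith⟩
      · rintro ⟨⟨h1, -⟩, h2⟩
        simp only [mem_preimage, mem_Ioi] at h2
        exact ⟨h1, by linarith⟩
    rw [heq]
    have hcont : ContinuousOn (fun p : EuclideanSpace ℝ (Fin d) × ℝ => p.2 - G p.1)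
        ((interior C) ×ˢ (univ : Set ℝ)) :=
      continuousOn_snd.sub (hGc.comp continuousOn_fst (fun p hp => hp.1))
    exact hcont.isOpen_inter_preimage (isOpen_interior.prod isOpen_univ) isOpen_Ioi
  set T : Set (EuclideanSpace ℝ (Fin d) × ℝ) := Δ ×ˢ ({0} : Set ℝ) with hTdef
  have hTconv : Convex ℝ T := hΔconv.prod (convex_singleton 0)
  have hdisj : Disjoint S T := by
    rw [disjoint_left]
    rintro p ⟨hp1, hp2⟩ hpT
    rw [hTdef, mem_prod, mem_singleton_iff] at hpT
    have := hmin p.1 hpT.1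
    rw [hpT.2] at hp2
    linarith
  obtain ⟨L, u₀, hL1, hL2⟩ := geometric_hahn_banach_open hSconv hSopen hTconv hdisj
  have hLsplit : ∀ (w : EuclideanSpace ℝ (Fin d)) (t : ℝ),
      L (w, t) = L (w, 0) + t * L (0, 1) := by
    intro w t
    have : (w, t) = (w, (0:ℝ)) + t • ((0 : EuclideanSpace ℝ (Fin d)), (1:ℝ)) := by
      simp [Prod.ext_iff]
    rw [this, map_add, map_smul]
    simp
  set c : ℝ := L (0, 1) with hcdef
  have hx0 : u₀ ≤ L (xstar, 0) := hL2 _ (by exact ⟨hxΔ, rfl⟩)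
  have hSx : ∀ t : ℝ, 0 < t → L (xstar, 0) + t * c < u₀ := by
    intro t ht
    have hmem : ((xstar, t) : _ × ℝ) ∈ S := ⟨hxI, by linarith⟩
    have := hL1 _ hmem
    rwa [hLsplit] at this
  have hc : c < 0 := by
    have := hSx 1 one_pos
    nlinarith
  have hcpos : 0 < -c := by linarith
  -- the separating linear functional, normalized
  set ℓ : EuclideanSpace ℝ (Fin d) →L[ℝ] ℝ :=
    (-c)⁻¹ • (L.comp (ContinuousLinearMap.inl ℝ (EuclideanSpace ℝ (Fin d)) ℝ)) with hldef
  have hlapp : ∀ w, ℓ w = (-c)⁻¹ * L (w, 0) := by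
    intro w; simp [hldef]
  set a : EuclideanSpace ℝ (Fin d) :=
    (InnerProductSpace.toDual ℝ (EuclideanSpace ℝ (Fin d))).symm ℓ with hadef
  have hain : ∀ w, ⟪a, w⟫ = ℓ w := fun w => InnerProductSpace.toDual_symm_apply
  -- interior subgradient inequality
  have hkey : ∀ u ∈ interior C, ℓ u - ℓ xstar ≤ G u - G xstar := by
    intro u hu
    have hstep : ∀ ε : ℝ, 0 < ε → ℓ u - ℓ xstar < G u - G xstar + ε := by
      intro ε hε
      have hmem : ((u, G u - G xstar + ε) : _ × ℝ) ∈ S :=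
        ⟨hu, show G u + -(G xstar) < G u - G xstar + ε by linarith⟩
      have h1 := hL1 _ hmem
      rw [hLsplit] at h1
      have h2 : L (u, 0) + (G u - G xstar + ε) * c < L (xstar, 0) := lt_of_lt_of_le h1 hx0
      have h3 : L (u, 0) - L (xstar, 0) < (-c) * (G u - G xstar + ε) := by nlinarith
      have h4 : (-c)⁻¹ * (L (u, 0) - L (xstar, 0)) < G u - G xstar + ε := by
        rw [inv_mul_lt_iff₀ hcpos]
        linarith [h3]
      rw [hlapp, hlapp]
      linarith [h4, mul_sub ((-c)⁻¹) (L (u,0)) (L (xstar,0))]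
    by_contra hcon
    push_neg at hcon
    have := hstep ((ℓ u - ℓ xstar - (G u - G xstar)) / 2) (by linarith)
    linarith
  -- xstar value
  have hxle : L (xstar, 0) ≤ u₀ := by
    by_contra hcon
    push_neg at hcon
    set t : ℝ := (L (xstar, 0) - u₀) / (2 * (-c)) with htdef
    have htpos : 0 < t := div_pos (by linarith) (by linarith)
    have htc : t * c = -((L (xstar, 0) - u₀) / 2) := by
      rw [htdef]
      have hne : c ≠ 0 := ne_of_lt hc
      field_simp
    have := hSx t htpos
    rw [htc] at this
    linarith
  have hΔge : ∀ z ∈ Δ, ℓ xstar ≤ ℓ z := by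
    intro z hz
    have h1 : u₀ ≤ L (z, 0) := hL2 _ (by exact ⟨hz, rfl⟩)
    rw [hlapp, hlapp]
    have : L (xstar, 0) ≤ L (z, 0) := le_trans hxle h1
    have h2 : 0 ≤ (-c)⁻¹ := le_of_lt (inv_pos.mpr hcpos)
    nlinarith
  refine ⟨a, ?_, ?_⟩
  · intro u hu
    -- midpoint trick
    set w : EuclideanSpace ℝ (Fin d) := u + (1/2 : ℝ) • (xstar - u) with hwdef
    have hwI : w ∈ interior C :=
      hCconv.add_smul_sub_mem_interior' (subset_closure hu) hxI ⟨by norm_num, by norm_num⟩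
    have hwco : w = (1/2 : ℝ) • xstar + (1/2 : ℝ) • u := by
      rw [hwdef]; module
    have hGw : G w ≤ (1/2 : ℝ) * G xstar + (1/2 : ℝ) * G u := by
      rw [hwco]
      simpa using hG.2 hxC hu (by norm_num : (0:ℝ) ≤ 1/2) (by norm_num : (0:ℝ) ≤ 1/2)
        (by norm_num)
    have h1 := hkey w hwI
    have hw2 : w - xstar = (1/2 : ℝ) • (u - xstar) := by rw [hwdef]; module
    have hlin : ℓ w - ℓ xstar = (1/2 : ℝ) * (ℓ u - ℓ xstar) := by
      have : ℓ w - ℓ xstar = ℓ (w - xstar) := by rw [map_sub]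
      rw [this, hw2, map_smul]
      have : ℓ u - ℓ xstar = ℓ (u - xstar) := by rw [map_sub]
      rw [this]
      simp
    rw [hain, map_sub]
    nlinarith [h1, hlin, hGw]
  · intro z hz
    rw [hain, map_sub]
    have := hΔge z hz
    linarith

/-- **Optimality condition for the Bregman proximal step.**
If `x*` minimizes `x ↦ f(x) + α·D(x,y)` over `Δ` and `x* ∈ Δ° = Δ ∩ int C`, then there
is a subgradient `p` of `f` at `x*` such that
`⟪p + α·∇ω(x*) − α·∇ω(y), z − x*⟫ ≥ 0` for every `z ∈ Δ`. -/
theorem bregman_prox_optimality {d : ℕ}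
    (C : Set (EuclideanSpace ℝ (Fin d))) (hCconv : Convex ℝ C)
    (hCint : (interior C).Nonempty)
    (φ : EuclideanSpace ℝ (Fin d) → ℝ)
    (gφ : EuclideanSpace ℝ (Fin d) → EuclideanSpace ℝ (Fin d))
    (hgrad : ∀ y ∈ interior C, HasGradientAt φ (gφ y) y)
    (hgcont : ContinuousOn gφ (interior C))
    (Δ : Set (EuclideanSpace ℝ (Fin d))) (hΔC : Δ ⊆ C)
    (hΔcomp : IsCompact Δ) (hΔconv : Convex ℝ Δ)
    (hΔo : (Δ ∩ interior C).Nonempty)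
    (f : EuclideanSpace ℝ (Fin d) → ℝ) (hf : ConvexOn ℝ C f)
    (α : ℝ) (hα : 0 < α)
    (y : EuclideanSpace ℝ (Fin d)) (hy : y ∈ Δ ∩ interior C)
    (xstar : EuclideanSpace ℝ (Fin d)) (hxstar : xstar ∈ Δ ∩ interior C)
    (hmin : IsMinOn (fun x => f x + α * breg φ gφ x y) Δ xstar) :
    ∃ p : EuclideanSpace ℝ (Fin d),
      (∀ u ∈ C, f xstar + ⟪p, u - xstar⟫ ≤ f u) ∧
      ∀ z ∈ Δ, 0 ≤ ⟪p + α • gφ xstar - α • gφ y, z - xstar⟫ := by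
  classical
  have hxC : xstar ∈ C := hΔC hxstar.1
  set q : EuclideanSpace ℝ (Fin d) := α • gφ xstar - α • gφ y with hqdef
  set G : EuclideanSpace ℝ (Fin d) → ℝ := fun x => f x + ⟪q, x⟫ with hGdef
  have hlinconv : ConvexOn ℝ C (fun x => ⟪q, x⟫) := by
    refine ⟨hCconv, fun x hx z hz a b ha hb hab => le_of_eq ?_⟩
    show ⟪q, a • x + b • z⟫ = a • ⟪q, x⟫ + b • ⟪q, z⟫
    rw [inner_add_right, real_inner_smul_right, real_inner_smul_right, smul_eq_mul,
      smul_eq_mul]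
  have hG : ConvexOn ℝ C G := hf.add hlinconv
  -- xstar minimizes G over Δ
  have hGmin : ∀ z ∈ Δ, G xstar ≤ G z := by
    intro z hz
    have hzC : z ∈ C := hΔC hz
    set v : EuclideanSpace ℝ (Fin d) := z - xstar with hvdef
    -- derivative of t ↦ φ(xstar + t•v) at 0
    have hgx : HasGradientAt φ (gφ xstar) xstar := hgrad xstar hxstar.2
    have hcurve : HasDerivAt (fun t : ℝ => xstar + t • v) v 0 := by
      simpa using ((hasDerivAt_id (0:ℝ)).smul_const v).const_add xstar
    have hψ : HasDerivAt (fun t : ℝ => φ (xstar + t • v)) (⟪gφ xstar, v⟫) 0 := by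
      have hfd : HasFDerivAt φ
          ((InnerProductSpace.toDual ℝ (EuclideanSpace ℝ (Fin d))) (gφ xstar))
          ((fun t : ℝ => xstar + t • v) 0) := by
        simpa using hgx.hasFDerivAt
      have := hfd.comp_hasDerivAt 0 hcurve
      simp [InnerProductSpace.toDual_apply_apply] at this
      exact this
    have hslope : Tendsto (slope (fun t : ℝ => φ (xstar + t • v)) 0) (𝓝[>] 0)
        (𝓝 ⟪gφ xstar, v⟫) := by
      refine (hasDerivAt_iff_tendsto_slope.mp hψ).mono_left (nhdsWithin_mono 0 ?_)
      intro t ht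
      exact ne_of_gt ht
    -- difference quotient inequality on (0,1]
    have hev : ∀ t ∈ Ioc (0:ℝ) 1,
        0 ≤ f z - f xstar + α * slope (fun t : ℝ => φ (xstar + t • v)) 0 t
          - α * ⟪gφ y, v⟫ := by
      intro t ht
      have ht0 : 0 < t := ht.1
      have hrep : xstar + t • v = (1 - t) • xstar + t • z := by
        rw [hvdef]; module
      have hxt : xstar + t • v ∈ Δ := by
        rw [hrep]
        exact hΔconv hxstar.1 hz (by linarith [ht.2]) ht0.le (by ring)
      have hmint : f xstar + α * (φ xstar - φ y - ⟪gφ y, xstar - y⟫)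
          ≤ f (xstar + t • v) + α * (φ (xstar + t • v) - φ y
            - ⟪gφ y, (xstar + t • v) - y⟫) := hmin hxt
      have hfconv : f (xstar + t • v) ≤ (1 - t) * f xstar + t * f z := by
        rw [hrep]
        simpa using hf.2 hxC hzC (by linarith [ht.2] : (0:ℝ) ≤ 1 - t) ht0.le (by ring)
      have hinner : ⟪gφ y, (xstar + t • v) - y⟫ = ⟪gφ y, xstar - y⟫ + t * ⟪gφ y, v⟫ := by
        have : (xstar + t • v) - y = (xstar - y) + t • v := by module
        rw [this, inner_add_right, real_inner_smul_right]
      rw [hinner] at hmint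
      have key : 0 ≤ t * (f z - f xstar) + α * (φ (xstar + t • v) - φ xstar)
          - t * (α * ⟪gφ y, v⟫) := by nlinarith [hmint, hfconv]
      have hsl : slope (fun t : ℝ => φ (xstar + t • v)) 0 t
          = (φ (xstar + t • v) - φ xstar) / t := by
        rw [slope_def_field]
        simp
      rw [hsl]
      have h2 : f z - f xstar + α * ((φ (xstar + t • v) - φ xstar) / t) - α * ⟪gφ y, v⟫
          = (t * (f z - f xstar) + α * (φ (xstar + t • v) - φ xstar)
              - t * (α * ⟪gφ y, v⟫)) / t := by
        field_simp
      rw [h2]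
      exact div_nonneg key ht0.le
    have hlim : Tendsto (fun t : ℝ => f z - f xstar
        + α * slope (fun t : ℝ => φ (xstar + t • v)) 0 t - α * ⟪gφ y, v⟫) (𝓝[>] 0)
        (𝓝 (f z - f xstar + α * ⟪gφ xstar, v⟫ - α * ⟪gφ y, v⟫)) := by
      exact (tendsto_const_nhds.add (hslope.const_mul α)).sub tendsto_const_nhds
    have hL : 0 ≤ f z - f xstar + α * ⟪gφ xstar, v⟫ - α * ⟪gφ y, v⟫ := by
      refine ge_of_tendsto hlim ?_
      exact eventually_of_mem (Ioc_mem_nhdsGT zero_lt_one) hev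
    have hq : ⟪q, z⟫ - ⟪q, xstar⟫ = α * ⟪gφ xstar, v⟫ - α * ⟪gφ y, v⟫ := by
      have h1 : ⟪q, z⟫ - ⟪q, xstar⟫ = ⟪q, v⟫ := by rw [hvdef, inner_sub_right]
      have h2 : ⟪q, v⟫ = ⟪α • gφ xstar, v⟫ - ⟪α • gφ y, v⟫ := by
        rw [hqdef, inner_sub_left]
      rw [h1, h2, real_inner_smul_left, real_inner_smul_left]
    simp only [hGdef]
    linarith
  obtain ⟨a, ha1, ha2⟩ :=
    subgrad_min_aux C hCconv Δ hΔC hΔconv G hG xstar hxstar.1 hxstar.2 hGmin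
  refine ⟨a - q, ?_, ?_⟩
  · intro u hu
    have h := ha1 u hu
    simp only [hGdef] at h
    have hin : ⟪a - q, u - xstar⟫ = ⟪a, u - xstar⟫ - (⟪q, u⟫ - ⟪q, xstar⟫) := by
      have h3 : ⟪q, u - xstar⟫ = ⟪q, u⟫ - ⟪q, xstar⟫ := inner_sub_right _ _ _
      rw [inner_sub_left, h3]
    rw [hin]
    linarith
  · intro z hz
    have heq : a - q + α • gφ xstar - α • gφ y = a := by
      rw [hqdef]; abel
    rw [heq]
    exact ha2 z hz
end

section
/- Suppose Λ* := argmax_{x∈X} F(x) is nonempty and bounded. Then there exist constants c₀ > 0 and ℓ₀ > 0 such that F satisfies the weak error bound condition with constants c₀, ℓ₀; that is, for every x ∈ X with dist(x, Λ*) ≥ ℓ₀ and every x* ∈ Λ*, one has F(x*) − F(x) ≥ c₀ · dist(x, Λ*). -/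
open Metric Bornology


/-- **Nonempty bounded maximizer set implies the weak error bound condition.**
If `F` is concave and continuous on the nonempty closed convex set `X ⊆ ℝⁿ` and
`Λ* = argmax_{x∈X} F(x)` is nonempty and bounded, then there exist `c₀, ℓ₀ > 0` such
that `F(x*) − F(x) ≥ c₀·dist(x, Λ*)` whenever `x ∈ X` with `dist(x, Λ*) ≥ ℓ₀` and
`x* ∈ Λ*`. -/
theorem weak_error_bound_of_bounded_argmax {n : ℕ}
    (X : Set (EuclideanSpace ℝ (Fin n))) (hXne : X.Nonempty)
    (hXclosed : IsClosed X) (hXconv : Convex ℝ X)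
    (F : EuclideanSpace ℝ (Fin n) → ℝ)
    (hFcont : ContinuousOn F X) (hFconc : ConcaveOn ℝ X F)
    (hne : {x | x ∈ X ∧ ∀ y ∈ X, F y ≤ F x}.Nonempty)
    (hbdd : Bornology.IsBounded {x | x ∈ X ∧ ∀ y ∈ X, F y ≤ F x}) :
    ∃ c₀ > (0 : ℝ), ∃ ℓ₀ > (0 : ℝ), ∀ x ∈ X,
      ℓ₀ ≤ Metric.infDist x {x | x ∈ X ∧ ∀ y ∈ X, F y ≤ F x} →
      ∀ xstar ∈ {x | x ∈ X ∧ ∀ y ∈ X, F y ≤ F x},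
        c₀ * Metric.infDist x {x | x ∈ X ∧ ∀ y ∈ X, F y ≤ F x} ≤ F xstar - F x := by
  set S : Set (EuclideanSpace ℝ (Fin n)) := {x | x ∈ X ∧ ∀ y ∈ X, F y ≤ F x} with hS
  obtain ⟨x₀, hx₀X, hx₀max⟩ := hne
  set M : ℝ := F x₀ with hM
  have hSsub : S ⊆ X := fun z hz => hz.1
  have hSeq : S = X ∩ F ⁻¹' Set.Ici M := by
    ext z
    constructor
    · rintro ⟨hzX, hzmax⟩
      exact ⟨hzX, hzmax x₀ hx₀X⟩
    · rintro ⟨hzX, hzM⟩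
      exact ⟨hzX, fun y hy => (hx₀max y hy).trans hzM⟩
  have hSclosed : IsClosed S := by
    rw [hSeq]
    exact hFcont.preimage_isClosed_of_isClosed hXclosed isClosed_Ici
  have hSne : S.Nonempty := ⟨x₀, hx₀X, hx₀max⟩
  have hScompact : IsCompact S := Metric.isCompact_of_isClosed_isBounded hSclosed hbdd
  have hMeq : ∀ z ∈ S, F z = M := fun z hz =>
    le_antisymm (hx₀max z hz.1) (hz.2 x₀ hx₀X)
  -- key construction
  have key : ∀ x ∈ X, 1 ≤ infDist x S →
      ∃ y, y ∈ X ∧ infDist y S = 1 ∧ infDist x S * (M - F y) ≤ M - F x := by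
    intro x hx hd
    set d : ℝ := infDist x S with hdd
    have hd0 : 0 < d := lt_of_lt_of_le one_pos hd
    obtain ⟨p, hpS, hpd⟩ := hScompact.exists_infDist_eq_dist hSne x
    set t : ℝ := 1 / d with ht
    have ht0 : 0 < t := by positivity
    have ht1 : t ≤ 1 := by rw [ht]; rw [div_le_one hd0]; exact hd
    set y : EuclideanSpace ℝ (Fin n) := (1 - t) • p + t • x with hy
    have hyX : y ∈ X := hXconv hpS.1 hx (by linarith) (le_of_lt ht0) (by ring)
    have hyp : y - p = t • (x - p) := by
      rw [hy]; module
    have hxy : x - y = (1 - t) • (x - p) := by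
      rw [hy]; module
    have hxp : ‖x - p‖ = d := by
      rw [hdd, hpd, dist_eq_norm]
    have hdyp : dist y p = 1 := by
      rw [dist_eq_norm, hyp, norm_smul, hxp, Real.norm_eq_abs, abs_of_pos ht0, ht]
      field_simp
    have hdxy : dist x y = (1 - t) * d := by
      rw [dist_eq_norm, hxy, norm_smul, hxp, Real.norm_eq_abs, abs_of_nonneg (by linarith)]
    have hinf : infDist y S = 1 := by
      apply le_antisymm
      · calc infDist y S ≤ dist y p := Metric.infDist_le_dist_of_mem hpS
          _ = 1 := hdyp
      · by_contra hcon
        push_neg at hcon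
        obtain ⟨q, hq, hqd⟩ := (Metric.infDist_lt_iff hSne).mp hcon
        have h1 : d ≤ dist x q := by rw [hdd]; exact Metric.infDist_le_dist_of_mem hq
        have h2 : dist x q ≤ dist x y + dist y q := dist_triangle x y q
        have h3 : t * d = 1 := by rw [ht]; field_simp
        nlinarith
    refine ⟨y, hyX, hinf, ?_⟩
    have hconc := hFconc.2 hpS.1 hx (by linarith : (0:ℝ) ≤ 1 - t) (le_of_lt ht0) (by ring)
    simp only [smul_eq_mul] at hconc
    have hFp : F p = M := hMeq p hpS
    have hFyM : F y ≤ M := hx₀max y hyX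
    have h3 : t * d = 1 := by rw [ht]; field_simp
    -- (1-t) * M + t * F x ≤ F y  ⟹  M - F y ≤ t (M - F x) ⟹ d (M - F y) ≤ M - F x
    rw [hFp] at hconc
    nlinarith
  by_cases hD : {y | y ∈ X ∧ infDist y S = 1}.Nonempty
  · -- maximum of F over D
    set D : Set (EuclideanSpace ℝ (Fin n)) := {y | y ∈ X ∧ infDist y S = 1} with hDdef
    have hDsub : D ⊆ X := fun z hz => hz.1
    have hDclosed : IsClosed D := by
      have : D = X ∩ (fun z => infDist z S) ⁻¹' {1} := by
        ext z; simp [hDdef]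
      rw [this]
      exact hXclosed.inter (isClosed_singleton.preimage (Metric.continuous_infDist_pt S))
    have hDbdd : IsBounded D := by
      obtain ⟨r, hr⟩ := hbdd.subset_closedBall x₀
      apply (isBounded_closedBall (x := x₀) (r := r + 2)).subset
      intro z hz
      have : infDist z S < 2 := by rw [hz.2]; norm_num
      rw [Metric.infDist_lt_iff hSne] at this
      obtain ⟨q, hqS, hqd⟩ := this
      have := hr hqS
      simp only [Metric.mem_closedBall] at this ⊢
      calc dist z x₀ ≤ dist z q + dist q x₀ := dist_triangle _ _ _
        _ ≤ r + 2 := by linarith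
    have hDcompact : IsCompact D := Metric.isCompact_of_isClosed_isBounded hDclosed hDbdd
    obtain ⟨y₀, hy₀D, hy₀max⟩ := hDcompact.exists_isMaxOn hD (hFcont.mono hDsub)
    have hy₀notS : y₀ ∉ S := by
      intro h
      have := Metric.infDist_zero_of_mem h
      rw [hy₀D.2] at this; norm_num at this
    have hy₀lt : F y₀ < M := by
      by_contra h
      push_neg at h
      exact hy₀notS ⟨hy₀D.1, fun y hy => (hx₀max y hy).trans h⟩
    refine ⟨M - F y₀, by linarith, 1, one_pos, ?_⟩
    intro x hx hd xstar hxstar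
    obtain ⟨y, hyX, hy1, hkey⟩ := key x hx hd
    have hyD : y ∈ D := ⟨hyX, hy1⟩
    have hFy : F y ≤ F y₀ := hy₀max hyD
    have hFxstar : F xstar = M := hMeq xstar hxstar
    rw [hFxstar]
    have hd0 : (0:ℝ) ≤ infDist x S := le_trans one_pos.le hd
    nlinarith
  · refine ⟨1, one_pos, 1, one_pos, ?_⟩
    intro x hx hd xstar hxstar
    obtain ⟨y, hyX, hy1, _⟩ := key x hx hd
    exact absurd ⟨y, hyX, hy1⟩ hD
end

section
/- Suppose Λ* := argmax_{x∈X} F(x) is nonempty, let F* be the maximum value of F over X, and suppose F satisfies the error bound condition with parameters β ∈ (0,1], δ > 0 and C_δ > 0, i.e. dist(x, Λ*) ≤ C_δ · (F* − F(x))^β for every x in the δ-superlevel set S_δ := {x ∈ X : F* − F(x) ≤ δ}. Then for every x ∈ X with dist(x, Λ*) ≥ C_δ · δ^β one has dist(x, Λ*) ≤ C_δ · δ^{β−1} · (F* − F(x)). -/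
/-- **The classical error bound condition implies a global linear bound away from the
maximizer set.** If `F` satisfies the error bound condition with parameters
`β ∈ (0,1]`, `δ > 0`, `C_δ > 0` on its `δ`-superlevel set, then every `x ∈ X` with
`dist(x, Λ*) ≥ C_δ·δ^β` satisfies `dist(x, Λ*) ≤ C_δ·δ^{β−1}·(F* − F(x))`. -/
theorem ebc_implies_weak_ebc {n : ℕ}
    (X : Set (EuclideanSpace ℝ (Fin n))) (hXne : X.Nonempty)
    (hXclosed : IsClosed X) (hXconv : Convex ℝ X)
    (F : EuclideanSpace ℝ (Fin n) → ℝ)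
    (hFcont : ContinuousOn F X) (hFconc : ConcaveOn ℝ X F)
    (xstar : EuclideanSpace ℝ (Fin n))
    (hxstar : xstar ∈ {z | z ∈ X ∧ ∀ y ∈ X, F y ≤ F z})
    (Fstar : ℝ) (hFstar : Fstar = F xstar)
    (β δ Cδ : ℝ) (hβ0 : 0 < β) (hβ1 : β ≤ 1) (hδ : 0 < δ) (hCδ : 0 < Cδ)
    (hEBC : ∀ x ∈ X, Fstar - F x ≤ δ →
      Metric.infDist x {z | z ∈ X ∧ ∀ y ∈ X, F y ≤ F z} ≤ Cδ * (Fstar - F x) ^ β) :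
    ∀ x ∈ X, Cδ * δ ^ β ≤ Metric.infDist x {z | z ∈ X ∧ ∀ y ∈ X, F y ≤ F z} →
      Metric.infDist x {z | z ∈ X ∧ ∀ y ∈ X, F y ≤ F z}
        ≤ Cδ * δ ^ (β - 1) * (Fstar - F x) := by
  intro x hx hxd
  set S := {z | z ∈ X ∧ ∀ y ∈ X, F y ≤ F z} with hSdef
  have hSne : S.Nonempty := ⟨xstar, hxstar⟩
  -- S is closed
  have hSeq : S = X ∩ F ⁻¹' {Fstar} := by
    ext z
    constructor
    · rintro ⟨hzX, hzmax⟩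
      refine ⟨hzX, ?_⟩
      have h1 : F z ≤ F xstar := hxstar.2 z hzX
      have h2 : F xstar ≤ F z := hzmax xstar hxstar.1
      simp [hFstar, le_antisymm h1 h2]
    · rintro ⟨hzX, hzF⟩
      simp only [Set.mem_preimage, Set.mem_singleton_iff] at hzF
      exact ⟨hzX, fun y hy => by rw [hzF]; rw [hFstar]; exact hxstar.2 y hy⟩
  have hSclosed : IsClosed S := by
    rw [hSeq]
    exact hFcont.preimage_isClosed_of_isClosed hXclosed isClosed_singleton
  have hgap : ∀ z ∈ X, 0 ≤ Fstar - F z := fun z hz => by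
    have := hxstar.2 z hz; rw [hFstar]; linarith
  have hgx : 0 ≤ Fstar - F x := hgap x hx
  -- the gap at x is at least δ
  have hg : δ ≤ Fstar - F x := by
    by_contra h
    push_neg at h
    have hEB := hEBC x hx h.le
    have hlt : Cδ * (Fstar - F x) ^ β < Cδ * δ ^ β :=
      mul_lt_mul_of_pos_left (Real.rpow_lt_rpow hgx h hβ0) hCδ
    linarith
  have hgpos : 0 < Fstar - F x := lt_of_lt_of_le hδ hg
  -- nearest point in S
  obtain ⟨xb, hxbS, hdist⟩ := hSclosed.exists_infDist_eq_dist hSne x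
  have hxbX : xb ∈ X := hxbS.1
  have hFxb : F xb = Fstar := by
    have h1 : F xb ≤ F xstar := hxstar.2 xb hxbX
    have h2 : F xstar ≤ F xb := hxbS.2 xstar hxstar.1
    rw [hFstar]; exact le_antisymm h1 h2
  set a : ℝ := δ / (Fstar - F x) with ha
  have ha0 : 0 < a := div_pos hδ hgpos
  have ha1 : a ≤ 1 := (div_le_one hgpos).mpr hg
  set y := (1 - a) • xb + a • x with hy
  have hyX : y ∈ X := hXconv hxbX hx (by linarith) ha0.le (by ring)
  have hFy : (1 - a) * F xb + a * F x ≤ F y :=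
    hFconc.2 hxbX hx (by linarith) ha0.le (by ring)
  have hgapy : Fstar - F y ≤ δ := by
    have : a * (Fstar - F x) = δ := div_mul_cancel₀ δ hgpos.ne'
    rw [hFxb] at hFy
    nlinarith
  have hEBy := hEBC y hyX hgapy
  have hgy : 0 ≤ Fstar - F y := hgap y hyX
  have hEBy' : Metric.infDist y S ≤ Cδ * δ ^ β := by
    calc Metric.infDist y S ≤ Cδ * (Fstar - F y) ^ β := hEBy
    _ ≤ Cδ * δ ^ β :=
      mul_le_mul_of_nonneg_left (Real.rpow_le_rpow hgy hgapy hβ0.le) hCδ.le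
  have hdistxy : dist x y = (1 - a) * Metric.infDist x S := by
    have hxy : x - y = (1 - a) • (x - xb) := by
      rw [hy]; module
    rw [dist_eq_norm, hxy, norm_smul, Real.norm_eq_abs,
      abs_of_nonneg (by linarith : (0:ℝ) ≤ 1 - a), hdist, dist_eq_norm]
  have htri : Metric.infDist x S ≤ Metric.infDist y S + dist x y :=
    Metric.infDist_le_infDist_add_dist
  have hkey : a * Metric.infDist x S ≤ Cδ * δ ^ β := by
    rw [hdistxy] at htri
    linarith
  -- conclude
  have hfin : Metric.infDist x S ≤ Cδ * δ ^ β * ((Fstar - F x) / δ) := by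
    rw [ha, div_mul_eq_mul_div, div_le_iff₀ hgpos] at hkey
    rw [← mul_div_assoc, le_div_iff₀ hδ]
    linarith [hkey, mul_comm (Metric.infDist x S) δ]
  calc Metric.infDist x S ≤ Cδ * δ ^ β * ((Fstar - F x) / δ) := hfin
  _ = Cδ * δ ^ (β - 1) * (Fstar - F x) := by
    rw [Real.rpow_sub hδ, Real.rpow_one]
    field_simp
end

section
/- Let μ₁, μ₂ ∈ Δ with μ₂ entrywise strictly positive, let θ ∈ (0,1], and set μ̃₂ := (1−θ)·μ₂ + (θ/d)·1 where 1 is the all-ones vector. Then D(μ₁, μ̃₂) − D(μ₁, μ₂) ≤ θ · log d, and moreover D(μ₁, μ̃₂) ≤ log(d/θ). -/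
/-- Kullback–Leibler divergence on ℝ^d (with the convention `0·log 0 = 0`, which holds
automatically since multiplication by zero gives zero). -/
noncomputable def klDiv {d : ℕ} (μ₁ μ₂ : Fin d → ℝ) : ℝ :=
  ∑ i, μ₁ i * Real.log (μ₁ i / μ₂ i)

/-- **Effect of mixing with the uniform distribution on the KL divergence.**
For `μ₁, μ₂` in the probability simplex with `μ₂` entrywise positive, `θ ∈ (0,1]` and
`μ̃₂ = (1−θ)·μ₂ + (θ/d)·1`, one has `D(μ₁, μ̃₂) − D(μ₁, μ₂) ≤ θ·log d` and
`D(μ₁, μ̃₂) ≤ log(d/θ)`. -/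
theorem kl_mixing_bounds {d : ℕ} (hd : 1 ≤ d)
    (μ₁ μ₂ : Fin d → ℝ)
    (hμ₁ : (∀ i, 0 ≤ μ₁ i) ∧ ∑ i, μ₁ i = 1)
    (hμ₂ : (∀ i, 0 < μ₂ i) ∧ ∑ i, μ₂ i = 1)
    (θ : ℝ) (hθ0 : 0 < θ) (hθ1 : θ ≤ 1)
    (μt₂ : Fin d → ℝ) (hμt₂ : ∀ i, μt₂ i = (1 - θ) * μ₂ i + θ / d) :
    klDiv μ₁ μt₂ - klDiv μ₁ μ₂ ≤ θ * Real.log d ∧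
    klDiv μ₁ μt₂ ≤ Real.log (d / θ) := by
  obtain ⟨h1pos, h1sum⟩ := hμ₁
  obtain ⟨h2pos, h2sum⟩ := hμ₂
  have hdpos : (0:ℝ) < d := by exact_mod_cast Nat.lt_of_lt_of_le Nat.zero_lt_one hd
  have hd1 : (1:ℝ) ≤ d := by exact_mod_cast hd
  have hθd : 0 < θ / d := div_pos hθ0 hdpos
  have hθ0' : 0 ≤ 1 - θ := by linarith
  have hμt₂pos : ∀ i, 0 < μt₂ i := by
    intro i
    rw [hμt₂ i]
    have := (h2pos i).le
    nlinarith
  have hμtge : ∀ i, θ / d ≤ μt₂ i := by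
    intro i
    rw [hμt₂ i]
    nlinarith [(h2pos i).le]
  have hμ₂le1 : ∀ i, μ₂ i ≤ 1 := by
    intro i
    rw [← h2sum]
    exact Finset.single_le_sum (fun j _ => (h2pos j).le) (Finset.mem_univ i)
  have hμ₁le1 : ∀ i, μ₁ i ≤ 1 := by
    intro i
    rw [← h1sum]
    exact Finset.single_le_sum (fun j _ => h1pos j) (Finset.mem_univ i)
  -- concavity bound: log μ₂ i - log μt₂ i ≤ θ * log d
  have key : ∀ i, Real.log (μ₂ i) - Real.log (μt₂ i) ≤ θ * Real.log d := by
    intro i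
    have hconc := strictConcaveOn_log_Ioi.concaveOn.2
      (x := μ₂ i) (y := 1 / d) (Set.mem_Ioi.2 (h2pos i))
      (Set.mem_Ioi.2 (by positivity)) hθ0' hθ0.le (by ring)
    simp only [smul_eq_mul] at hconc
    have harg : (1 - θ) * μ₂ i + θ * (1 / d) = μt₂ i := by
      rw [hμt₂ i]; ring
    rw [harg] at hconc
    have hlog1d : Real.log (1 / d) = - Real.log d := by
      rw [one_div, Real.log_inv]
    rw [hlog1d] at hconc
    have hlogμ₂ : Real.log (μ₂ i) ≤ 0 := Real.log_nonpos (h2pos i).le (hμ₂le1 i)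
    nlinarith
  constructor
  · -- first bound
    unfold klDiv
    rw [← Finset.sum_sub_distrib]
    have : ∀ i ∈ Finset.univ, μ₁ i * Real.log (μ₁ i / μt₂ i) - μ₁ i * Real.log (μ₁ i / μ₂ i)
        ≤ μ₁ i * (θ * Real.log d) := by
      intro i _
      rcases eq_or_lt_of_le (h1pos i) with h | h
      · simp [← h]
      · rw [Real.log_div (ne_of_gt h) (ne_of_gt (hμt₂pos i)),
          Real.log_div (ne_of_gt h) (ne_of_gt (h2pos i))]
        have := key i
        nlinarith
    calc ∑ i, (μ₁ i * Real.log (μ₁ i / μt₂ i) - μ₁ i * Real.log (μ₁ i / μ₂ i))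
        ≤ ∑ i, μ₁ i * (θ * Real.log d) := Finset.sum_le_sum this
      _ = θ * Real.log d := by rw [← Finset.sum_mul, h1sum, one_mul]
  · -- second bound
    unfold klDiv
    have hdθpos : (0:ℝ) < d / θ := div_pos hdpos hθ0
    have : ∀ i ∈ Finset.univ, μ₁ i * Real.log (μ₁ i / μt₂ i) ≤ μ₁ i * Real.log (d / θ) := by
      intro i _
      rcases eq_or_lt_of_le (h1pos i) with h | h
      · simp [← h]
      · have hratio : μ₁ i / μt₂ i ≤ d / θ := by
          have h1 : μ₁ i / μt₂ i ≤ μ₁ i / (θ / d) :=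
            div_le_div_of_nonneg_left (h1pos i) hθd (hμtge i)
          have h2 : μ₁ i / (θ / d) = μ₁ i * (d / θ) := by
            field_simp
          have h3 : μ₁ i * (d / θ) ≤ 1 * (d / θ) :=
            mul_le_mul_of_nonneg_right (hμ₁le1 i) hdθpos.le
          linarith
        have hlog : Real.log (μ₁ i / μt₂ i) ≤ Real.log (d / θ) :=
          Real.log_le_log (div_pos h (hμt₂pos i)) hratio
        exact mul_le_mul_of_nonneg_left hlog (h1pos i)
    calc ∑ i, μ₁ i * Real.log (μ₁ i / μt₂ i)
        ≤ ∑ i, μ₁ i * Real.log (d / θ) := Finset.sum_le_sum this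
      _ = Real.log (d / θ) := by rw [← Finset.sum_mul, h1sum, one_mul]
end

section
/- Fix V, α > 0, a point x ∈ Δ°, scalars Q₁,...,Q_L ≥ 0 and H₁,...,H_M ∈ ℝ. Let f, g₁,...,g_L : C → ℝ be convex, let p_f be a subgradient of f at x and p_i a subgradient of g_i at x with Σ_{i=1}^L ‖p_i‖_*² ≤ D₂², and suppose Σ_{i=1}^L |g_i(μ)|² ≤ G² for all μ ∈ Δ. Let h₁,...,h_M ∈ ℝ^d with Σ_{j=1}^M ‖h_j‖_*² ≤ H², and let b ∈ ℝ^M with Σ_{j=1}^M b_j² ≤ 2RH²/β. Suppose x⁺ attains the minimum over Δ of μ ↦ ⟨V·p_f + Σ_i Q_i·p_i + Σ_j H_j·h_j, μ⟩ + α·D(μ, x), with x⁺ ∈ Δ°. Define Q_i⁺ := max{Q_i + g_i(x) + ⟨p_i, x⁺ − x⟩, 0}, H_j⁺ := H_j + ⟨h_j, x⁺⟩ − b_j, and Δdrift := (‖Q⁺‖₂² − ‖Q‖₂²)/2 + (‖H⁺‖₂² − ‖H‖₂²)/2. Then for every μ ∈ Δ: V·⟨p_f, x⁺ − x⟩ +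 Δdrift + α·D(x⁺, x) ≤ V·(f(μ) − f(x)) + Σ_{i=1}^L Q_i·g_i(μ) + Σ_{j=1}^M H_j·(⟨h_j, μ⟩ − b_j) + α·D(μ, x) − α·D(μ, x⁺) + 4RH²/β + G² + 2RD₂²/β. -/
open scoped RealInnerProductSpace

/-- Dual norm `‖v‖_* = sup_{‖y‖ ≤ 1} ⟪v, y⟫` associated with a primal norm `nrm`. -/
noncomputable def dualNorm {d : ℕ} (nrm : EuclideanSpace ℝ (Fin d) → ℝ)
    (v : EuclideanSpace ℝ (Fin d)) : ℝ :=
  sSup ((fun y => ⟪v, y⟫) '' {y | nrm y ≤ 1})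

section dppAux
variable {d : ℕ} {nrm : EuclideanSpace ℝ (Fin d) → ℝ}

lemma dpp_nrm_basics (hadd : ∀ x y, nrm (x + y) ≤ nrm x + nrm y)
    (hsmul : ∀ (a : ℝ) x, nrm (a • x) = |a| * nrm x) :
    nrm 0 = 0 ∧ (∀ y, nrm (-y) = nrm y) ∧ (∀ y, 0 ≤ nrm y) := by
  have h0 : nrm 0 = 0 := by simpa using hsmul 0 0
  have hneg : ∀ y, nrm (-y) = nrm y := fun y => by simpa using hsmul (-1) y
  refine ⟨h0, hneg, fun y => ?_⟩
  have h1 := hadd y (-y)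
  rw [add_neg_cancel, h0, hneg] at h1
  linarith

lemma dpp_nrm_finsum_le {ι : Type*} (hadd : ∀ x y, nrm (x + y) ≤ nrm x + nrm y)
    (h0 : nrm 0 = 0) (t : Finset ι) (f : ι → EuclideanSpace ℝ (Fin d)) :
    nrm (∑ i ∈ t, f i) ≤ ∑ i ∈ t, nrm (f i) := by
  classical
  induction t using Finset.induction with
  | empty => simp [h0]
  | @insert a s h ih =>
      rw [Finset.sum_insert h, Finset.sum_insert h]
      exact (hadd _ _).trans (by linarith)

lemma dpp_nrm_lower (hadd : ∀ x y, nrm (x + y) ≤ nrm x + nrm y)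
    (hsmul : ∀ (a : ℝ) x, nrm (a • x) = |a| * nrm x)
    (hdef : ∀ x, nrm x = 0 → x = 0) :
    ∃ c : ℝ, 0 < c ∧ ∀ y, c * ‖y‖ ≤ nrm y := by
  obtain ⟨h0, hneg, hnn⟩ := dpp_nrm_basics hadd hsmul
  have hyrep : ∀ y : EuclideanSpace ℝ (Fin d), y = ∑ i, y i • EuclideanSpace.single i (1:ℝ) := by
    intro y
    have := (EuclideanSpace.basisFun (Fin d) ℝ).sum_repr y
    simpa [EuclideanSpace.basisFun_repr, EuclideanSpace.basisFun_apply] using this.symm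
  set K := ∑ i, nrm (EuclideanSpace.single i (1:ℝ)) with hK
  have hK0 : 0 ≤ K := Finset.sum_nonneg fun i _ => hnn _
  have hcoord : ∀ (y : EuclideanSpace ℝ (Fin d)) (i : Fin d), |y i| ≤ ‖y‖ := by
    intro y i
    have h1 := abs_real_inner_le_norm (EuclideanSpace.single i (1:ℝ)) y
    simpa [EuclideanSpace.inner_single_left, EuclideanSpace.norm_single] using h1
  have hupper : ∀ y, nrm y ≤ K * ‖y‖ := by
    intro y
    calc nrm y = nrm (∑ i, y i • EuclideanSpace.single i (1:ℝ)) := by rw [← hyrep]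
      _ ≤ ∑ i, nrm (y i • EuclideanSpace.single i (1:ℝ)) := dpp_nrm_finsum_le hadd h0 _ _
      _ = ∑ i, |y i| * nrm (EuclideanSpace.single i (1:ℝ)) := by simp [hsmul]
      _ ≤ ∑ i, ‖y‖ * nrm (EuclideanSpace.single i (1:ℝ)) :=
          Finset.sum_le_sum fun i _ => mul_le_mul_of_nonneg_right (hcoord y i) (hnn _)
      _ = K * ‖y‖ := by rw [hK, Finset.sum_mul]; exact Finset.sum_congr rfl fun i _ => by ring
  have habs : ∀ a b : EuclideanSpace ℝ (Fin d), |nrm a - nrm b| ≤ K * ‖a - b‖ := by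
    intro a b
    have h1 : nrm a ≤ nrm (a - b) + nrm b := by
      have := hadd (a - b) b; simpa using this
    have h2 : nrm b ≤ nrm (a - b) + nrm a := by
      have := hadd (b - a) a
      rw [sub_add_cancel] at this
      rw [← neg_sub a b, hneg] at this
      exact this
    have h3 := hupper (a - b)
    rw [abs_sub_le_iff]; constructor <;> linarith
  have hcont : Continuous nrm := by
    have : LipschitzWith (Real.toNNReal K) nrm := by
      apply LipschitzWith.of_dist_le_mul
      intro a b
      rw [Real.dist_eq, dist_eq_norm]
      exact (habs a b).trans (mul_le_mul_of_nonneg_right (Real.le_coe_toNNReal K) (norm_nonneg _))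
    exact this.continuous
  rcases (Metric.sphere (0 : EuclideanSpace ℝ (Fin d)) 1).eq_empty_or_nonempty with hs | hs
  · refine ⟨1, one_pos, fun y => ?_⟩
    by_cases hy : y = 0
    · simp [hy, h0]
    · exfalso
      have hmem : (‖y‖⁻¹ • y) ∈ Metric.sphere (0 : EuclideanSpace ℝ (Fin d)) 1 := by
        rw [mem_sphere_zero_iff_norm, norm_smul, norm_inv, norm_norm,
          inv_mul_cancel₀ (norm_ne_zero_iff.2 hy)]
      rw [hs] at hmem
      exact hmem
  · obtain ⟨y₀, hy₀, hmin⟩ := (isCompact_sphere (0 : EuclideanSpace ℝ (Fin d)) 1).exists_isMinOn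
      hs hcont.continuousOn
    have hy₀ne : y₀ ≠ 0 := by
      intro hcon
      rw [mem_sphere_zero_iff_norm, hcon] at hy₀
      simp at hy₀
    have hm : 0 < nrm y₀ := by
      rcases (hnn y₀).lt_or_eq with h | h
      · exact h
      · exact absurd (hdef y₀ h.symm) hy₀ne
    refine ⟨nrm y₀, hm, fun y => ?_⟩
    by_cases hy : y = 0
    · simp [hy, h0]
    · have hpos : 0 < ‖y‖ := norm_pos_iff.2 hy
      have hmem : (‖y‖⁻¹ • y) ∈ Metric.sphere (0 : EuclideanSpace ℝ (Fin d)) 1 := by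
        rw [mem_sphere_zero_iff_norm, norm_smul, norm_inv, norm_norm, inv_mul_cancel₀ hpos.ne']
      have h1 : nrm y₀ ≤ nrm (‖y‖⁻¹ • y) := hmin hmem
      rw [hsmul, abs_of_nonneg (by positivity)] at h1
      calc nrm y₀ * ‖y‖ ≤ (‖y‖⁻¹ * nrm y) * ‖y‖ := mul_le_mul_of_nonneg_right h1 hpos.le
        _ = nrm y := by field_simp

lemma dpp_dual_mul_bound (hadd : ∀ x y, nrm (x + y) ≤ nrm x + nrm y)
    (hsmul : ∀ (a : ℝ) x, nrm (a • x) = |a| * nrm x)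
    (hdef : ∀ x, nrm x = 0 → x = 0)
    (v z : EuclideanSpace ℝ (Fin d)) :
    ⟪v, z⟫ ≤ dualNorm nrm v * nrm z := by
  obtain ⟨h0, hneg, hnn⟩ := dpp_nrm_basics hadd hsmul
  obtain ⟨c, hc, hlow⟩ := dpp_nrm_lower hadd hsmul hdef
  have hbdd : BddAbove ((fun y => ⟪v, y⟫) '' {y | nrm y ≤ 1}) := by
    refine ⟨‖v‖ * c⁻¹, ?_⟩
    rintro _ ⟨y, hy, rfl⟩
    have h1 : c * ‖y‖ ≤ 1 := (hlow y).trans hy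
    have h2 : ‖y‖ ≤ c⁻¹ := by
      have h3 : c * c⁻¹ = 1 := mul_inv_cancel₀ hc.ne'
      nlinarith [h1, hc]
    calc ⟪v, y⟫ ≤ ‖v‖ * ‖y‖ := real_inner_le_norm v y
      _ ≤ ‖v‖ * c⁻¹ := mul_le_mul_of_nonneg_left h2 (norm_nonneg v)
  by_cases hz : nrm z = 0
  · have hz0 : z = 0 := hdef z hz
    subst hz0
    simp [hz]
  · have hzpos : 0 < nrm z := (hnn z).lt_of_ne (Ne.symm hz)
    have hmem : (nrm z)⁻¹ • z ∈ {y | nrm y ≤ 1} := by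
      simp only [Set.mem_setOf_eq, hsmul]
      rw [abs_of_nonneg (by positivity), inv_mul_cancel₀ hz]
    have hle : ⟪v, (nrm z)⁻¹ • z⟫ ≤ dualNorm nrm v := le_csSup hbdd ⟨_, hmem, rfl⟩
    rw [real_inner_smul_right] at hle
    calc (⟪v, z⟫ : ℝ) = ((nrm z)⁻¹ * ⟪v, z⟫) * nrm z := by field_simp
      _ ≤ dualNorm nrm v * nrm z := mul_le_mul_of_nonneg_right hle hzpos.le

lemma dpp_dual_sq_bound (hadd : ∀ x y, nrm (x + y) ≤ nrm x + nrm y)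
    (hsmul : ∀ (a : ℝ) x, nrm (a • x) = |a| * nrm x)
    (hdef : ∀ x, nrm x = 0 → x = 0)
    (v z : EuclideanSpace ℝ (Fin d)) :
    ⟪v, z⟫ ^ 2 ≤ (dualNorm nrm v) ^ 2 * (nrm z) ^ 2 := by
  obtain ⟨h0, hneg, hnn⟩ := dpp_nrm_basics hadd hsmul
  have h1 := dpp_dual_mul_bound hadd hsmul hdef v z
  have h2 := dpp_dual_mul_bound hadd hsmul hdef v (-z)
  rw [inner_neg_right, hneg] at h2
  nlinarith [h1, h2]

end dppAux

set_option maxHeartbeats 1000000 in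
/-- **Key drift-plus-penalty bound (one step of the primal-dual mirror descent).**
With `M₀ = 4RH²/β + G² + 2RD₂²/β`, for every `μ ∈ Δ`,
`V⟪p_f, x⁺−x⟫ + Δdrift + αD(x⁺,x) ≤ V(f(μ)−f(x)) + Σᵢ Qᵢ gᵢ(μ) + Σⱼ Hⱼ(⟪hⱼ,μ⟫−bⱼ)
 + αD(μ,x) − αD(μ,x⁺) + M₀`. -/
theorem dpp_key_bound {d L M : ℕ}
    (nrm : EuclideanSpace ℝ (Fin d) → ℝ)
    (hnrm_add : ∀ x y, nrm (x + y) ≤ nrm x + nrm y)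
    (hnrm_smul : ∀ (a : ℝ) x, nrm (a • x) = |a| * nrm x)
    (hnrm_def : ∀ x, nrm x = 0 → x = 0)
    (C : Set (EuclideanSpace ℝ (Fin d))) (hCconv : Convex ℝ C)
    (hCint : (interior C).Nonempty)
    (φ : EuclideanSpace ℝ (Fin d) → ℝ)
    (gφ : EuclideanSpace ℝ (Fin d) → EuclideanSpace ℝ (Fin d))
    (hgrad : ∀ y ∈ interior C, HasGradientAt φ (gφ y) y)
    (hgcont : ContinuousOn gφ (interior C))
    (Δ : Set (EuclideanSpace ℝ (Fin d))) (hΔC : Δ ⊆ C)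
    (hΔcomp : IsCompact Δ) (hΔconv : Convex ℝ Δ) (hΔ0 : (0 : EuclideanSpace ℝ (Fin d)) ∈ Δ)
    (hΔo : (Δ ∩ interior C).Nonempty)
    (β R : ℝ) (hβ : 0 < β) (hR : 0 < R)
    (hstrong : ∀ x ∈ interior C, ∀ y ∈ interior C,
      β / 2 * (nrm (x - y)) ^ 2 ≤ breg φ gφ x y)
    (hDbound : ∀ x ∈ Δ, ∀ y ∈ Δ ∩ interior C, breg φ gφ x y ≤ R)
    (hdiam : ∀ x ∈ Δ, ∀ y ∈ Δ, (nrm (x - y)) ^ 2 ≤ 2 * R / β)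
    (hpt : ∀ μ ∈ Δ, (nrm μ) ^ 2 ≤ 2 * R / β)
    (V α : ℝ) (hV : 0 < V) (hα : 0 < α)
    (x : EuclideanSpace ℝ (Fin d)) (hx : x ∈ Δ ∩ interior C)
    (Q : Fin L → ℝ) (hQ : ∀ i, 0 ≤ Q i) (Hm : Fin M → ℝ)
    (f : EuclideanSpace ℝ (Fin d) → ℝ) (hfconv : ConvexOn ℝ C f)
    (g : Fin L → EuclideanSpace ℝ (Fin d) → ℝ) (hgconv : ∀ i, ConvexOn ℝ C (g i))
    (pf : EuclideanSpace ℝ (Fin d))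
    (hpf : ∀ u ∈ C, f x + ⟪pf, u - x⟫ ≤ f u)
    (p : Fin L → EuclideanSpace ℝ (Fin d))
    (hp : ∀ i, ∀ u ∈ C, g i x + ⟪p i, u - x⟫ ≤ g i u)
    (D₂ G H : ℝ)
    (hD₂ : ∑ i, (dualNorm nrm (p i)) ^ 2 ≤ D₂ ^ 2)
    (hG : ∀ μ ∈ Δ, ∑ i, (g i μ) ^ 2 ≤ G ^ 2)
    (h : Fin M → EuclideanSpace ℝ (Fin d))
    (hH : ∑ j, (dualNorm nrm (h j)) ^ 2 ≤ H ^ 2)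
    (b : Fin M → ℝ) (hb : ∑ j, (b j) ^ 2 ≤ 2 * R * H ^ 2 / β)
    (xp : EuclideanSpace ℝ (Fin d)) (hxp : xp ∈ Δ ∩ interior C)
    (hmin : IsMinOn (fun μ =>
        ⟪V • pf + ∑ i, Q i • p i + ∑ j, Hm j • h j, μ⟫ + α * breg φ gφ μ x) Δ xp)
    (Qp : Fin L → ℝ)
    (hQp : ∀ i, Qp i = max (Q i + g i x + ⟪p i, xp - x⟫) 0)
    (Hp : Fin M → ℝ)
    (hHp : ∀ j, Hp j = Hm j + ⟪h j, xp⟫ - b j) :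
    ∀ μ ∈ Δ,
      V * ⟪pf, xp - x⟫
        + ((∑ i, (Qp i) ^ 2 - ∑ i, (Q i) ^ 2) / 2 + (∑ j, (Hp j) ^ 2 - ∑ j, (Hm j) ^ 2) / 2)
        + α * breg φ gφ xp x
      ≤ V * (f μ - f x) + ∑ i, Q i * g i μ + ∑ j, Hm j * (⟪h j, μ⟫ - b j)
        + α * breg φ gφ μ x - α * breg φ gφ μ xp
        + (4 * R * H ^ 2 / β + G ^ 2 + 2 * R * D₂ ^ 2 / β) := by
  
  intro μ hμ
  set s : EuclideanSpace ℝ (Fin d) := V • pf + ∑ i, Q i • p i + ∑ j, Hm j • h j with hs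
  -- variational inequality
  have hFd : HasFDerivAt
      (fun μ : EuclideanSpace ℝ (Fin d) => ⟪s, μ⟫ + α * breg φ gφ μ x)
      (innerSL ℝ s + α • (InnerProductSpace.toDual ℝ (EuclideanSpace ℝ (Fin d)) (gφ xp))
        - α • (innerSL ℝ (gφ x))) xp := by
    have hA : HasFDerivAt (fun μ : EuclideanSpace ℝ (Fin d) => (⟪s, μ⟫ : ℝ))
        (innerSL ℝ s) xp := (innerSL ℝ s).hasFDerivAt
    have hB : HasFDerivAt φ
        (InnerProductSpace.toDual ℝ (EuclideanSpace ℝ (Fin d)) (gφ xp)) xp :=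
      (hgrad xp hxp.2).hasFDerivAt
    have hC : HasFDerivAt (fun μ : EuclideanSpace ℝ (Fin d) => (⟪gφ x, μ⟫ : ℝ))
        (innerSL ℝ (gφ x)) xp := (innerSL ℝ (gφ x)).hasFDerivAt
    have hcomb := (((hA.add (hB.const_mul α)).sub (hC.const_mul α)).add_const
      (α * ⟪gφ x, x⟫ - α * φ x))
    have heq : (fun μ : EuclideanSpace ℝ (Fin d) => ⟪s, μ⟫ + α * breg φ gφ μ x)
        = fun μ : EuclideanSpace ℝ (Fin d) =>
          (⟪s, μ⟫ + α * φ μ - α * ⟪gφ x, μ⟫) + (α * ⟪gφ x, x⟫ - α * φ x) := by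
      funext ν
      simp only [breg, inner_sub_right]
      ring
    rw [heq]
    exact hcomb
  have hvi : 0 ≤ ⟪s, μ - xp⟫ + α * ⟪gφ xp, μ - xp⟫ - α * ⟪gφ x, μ - xp⟫ := by
    have hy : μ - xp ∈ posTangentConeAt Δ xp :=
      sub_mem_posTangentConeAt_of_segment_subset (hΔconv.segment_subset hxp.1 hμ)
    have h0 := hmin.localize.hasFDerivWithinAt_nonneg hFd.hasFDerivWithinAt hy
    simp only [ContinuousLinearMap.sub_apply, ContinuousLinearMap.add_apply,
      ContinuousLinearMap.coe_smul', Pi.smul_apply, innerSL_apply_apply,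
      InnerProductSpace.toDual_apply_apply, smul_eq_mul] at h0
    linarith
  -- three-point / core inequality
  have hcore : ⟪s, xp - x⟫ + α * breg φ gφ xp x
      ≤ ⟪s, μ - x⟫ + α * breg φ gφ μ x - α * breg φ gφ μ xp := by
    have e1 : (⟪s, μ - x⟫ : ℝ) = ⟪s, μ - xp⟫ + ⟪s, xp - x⟫ := by
      rw [← inner_add_right, sub_add_sub_cancel]
    have e3 : α * breg φ gφ μ x - α * breg φ gφ μ xp - α * breg φ gφ xp x
        = α * ⟪gφ xp, μ - xp⟫ - α * ⟪gφ x, μ - xp⟫ := by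
      simp only [breg, inner_sub_right]
      ring
    linarith [hvi, e1, e3]
  -- norm bounds
  have hsq : ∀ v z : EuclideanSpace ℝ (Fin d),
      ⟪v, z⟫ ^ 2 ≤ (dualNorm nrm v) ^ 2 * (nrm z) ^ 2 :=
    fun v z => dpp_dual_sq_bound hnrm_add hnrm_smul hnrm_def v z
  -- Q drift
  obtain ⟨a, ha⟩ : ∃ a : Fin L → ℝ, ∀ i, a i = g i x + ⟪p i, xp - x⟫ :=
    ⟨_, fun i => rfl⟩
  have hQdrift : (∑ i, Qp i ^ 2 - ∑ i, Q i ^ 2) / 2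
      ≤ ∑ i, Q i * a i + (G ^ 2 + 2 * R * D₂ ^ 2 / β) := by
    have hpt1 : ∀ i, Qp i ^ 2 ≤ Q i ^ 2 + 2 * Q i * a i
        + (2 * (g i x) ^ 2 + 2 * (dualNorm nrm (p i)) ^ 2 * (2 * R / β)) := by
      intro i
      have hQp' : Qp i = max (Q i + a i) 0 := by rw [hQp i, ha i, add_assoc]
      have h1 : 0 ≤ Qp i := by rw [hQp']; exact le_max_right _ _
      have h2 : Qp i ≤ |Q i + a i| := by
        rw [hQp']; exact max_le (le_abs_self _) (abs_nonneg _)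
      have h3 : ⟪p i, xp - x⟫ ^ 2 ≤ (dualNorm nrm (p i)) ^ 2 * (2 * R / β) := by
        have h4 := hsq (p i) (xp - x)
        have h5 := hdiam xp hxp.1 x hx.1
        nlinarith [sq_nonneg (dualNorm nrm (p i))]
      have h6 : a i ^ 2 ≤ 2 * (g i x) ^ 2 + 2 * (dualNorm nrm (p i)) ^ 2 * (2 * R / β) := by
        rw [ha i]
        nlinarith [sq_nonneg (g i x - ⟪p i, xp - x⟫), h3]
      have h7 : Qp i ^ 2 ≤ (Q i + a i) ^ 2 := by nlinarith [h1, h2, sq_abs (Q i + a i)]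
      nlinarith [h7, h6]
    have hsum := Finset.sum_le_sum fun i (_ : i ∈ Finset.univ) => hpt1 i
    rw [Finset.sum_add_distrib, Finset.sum_add_distrib, Finset.sum_add_distrib] at hsum
    have hgx := hG x hx.1
    have hsc2 : ∑ i, 2 * (g i x) ^ 2 = 2 * ∑ i, (g i x) ^ 2 := by
      rw [Finset.mul_sum]
    have hsc3 : ∑ i, 2 * (dualNorm nrm (p i)) ^ 2 * (2 * R / β)
        = (2 * (2 * R / β)) * ∑ i, (dualNorm nrm (p i)) ^ 2 := by
      rw [Finset.mul_sum]
      exact Finset.sum_congr rfl fun i _ => by ring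
    have hsc4 : ∑ i, 2 * Q i * a i = 2 * ∑ i, Q i * a i := by
      rw [Finset.mul_sum]
      exact Finset.sum_congr rfl fun i _ => by ring
    have h8 : (2 * (2 * R / β)) * ∑ i, (dualNorm nrm (p i)) ^ 2
        ≤ (2 * (2 * R / β)) * D₂ ^ 2 :=
      mul_le_mul_of_nonneg_left hD₂ (by positivity)
    have h9 : (2 * (2 * R / β)) * D₂ ^ 2 = 2 * (2 * R * D₂ ^ 2 / β) := by ring
    linarith [hsum, hgx, h8]
  -- H drift
  obtain ⟨cj, hcj⟩ : ∃ cj : Fin M → ℝ, ∀ j, cj j = ⟪h j, xp⟫ - b j :=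
    ⟨_, fun j => rfl⟩
  have hHdrift : (∑ j, Hp j ^ 2 - ∑ j, Hm j ^ 2) / 2
      ≤ ∑ j, Hm j * cj j + 4 * R * H ^ 2 / β := by
    have hpt1 : ∀ j, Hp j ^ 2 ≤ Hm j ^ 2 + 2 * Hm j * cj j
        + (2 * (dualNorm nrm (h j)) ^ 2 * (2 * R / β) + 2 * (b j) ^ 2) := by
      intro j
      have h1 : Hp j = Hm j + cj j := by rw [hHp j, hcj j]; ring
      have h3 : ⟪h j, xp⟫ ^ 2 ≤ (dualNorm nrm (h j)) ^ 2 * (2 * R / β) := by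
        have h4 := hsq (h j) xp
        have h5 := hpt xp hxp.1
        nlinarith [sq_nonneg (dualNorm nrm (h j))]
      have h6 : cj j ^ 2 ≤ 2 * (dualNorm nrm (h j)) ^ 2 * (2 * R / β) + 2 * (b j) ^ 2 := by
        rw [hcj j]
        nlinarith [sq_nonneg (⟪h j, xp⟫ + b j), h3]
      rw [h1]
      nlinarith [h6]
    have hsum := Finset.sum_le_sum fun j (_ : j ∈ Finset.univ) => hpt1 j
    rw [Finset.sum_add_distrib, Finset.sum_add_distrib, Finset.sum_add_distrib] at hsum
    have hsc2 : ∑ j, 2 * (dualNorm nrm (h j)) ^ 2 * (2 * R / β)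
        = (2 * (2 * R / β)) * ∑ j, (dualNorm nrm (h j)) ^ 2 := by
      rw [Finset.mul_sum]
      exact Finset.sum_congr rfl fun j _ => by ring
    have hsc3 : ∑ j, 2 * (b j) ^ 2 = 2 * ∑ j, (b j) ^ 2 := by rw [Finset.mul_sum]
    have hsc4 : ∑ j, 2 * Hm j * cj j = 2 * ∑ j, Hm j * cj j := by
      rw [Finset.mul_sum]
      exact Finset.sum_congr rfl fun j _ => by ring
    have h8 : (2 * (2 * R / β)) * ∑ j, (dualNorm nrm (h j)) ^ 2
        ≤ (2 * (2 * R / β)) * H ^ 2 :=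
      mul_le_mul_of_nonneg_left hH (by positivity)
    rw [hsc2, hsc3, hsc4] at hsum
    have e2 : (2 * (2 * R / β)) * H ^ 2 = 4 * (R / β) * H ^ 2 := by ring
    have e3 : 2 * R * H ^ 2 / β = 2 * (R / β) * H ^ 2 := by ring
    have e4 : 4 * R * H ^ 2 / β = 4 * (R / β) * H ^ 2 := by ring
    linarith [hsum, h8, hb]
  -- inner product expansion of s
  have hsx : ∀ z : EuclideanSpace ℝ (Fin d),
      (⟪s, z⟫ : ℝ) = V * ⟪pf, z⟫ + ∑ i, Q i * ⟪p i, z⟫ + ∑ j, Hm j * ⟪h j, z⟫ := by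
    intro z
    rw [hs]
    simp only [inner_add_left, sum_inner, real_inner_smul_left]
  -- sum splittings
  have hfin1 : ∑ i, Q i * a i = ∑ i, Q i * g i x + ∑ i, Q i * ⟪p i, xp - x⟫ := by
    rw [← Finset.sum_add_distrib]
    exact Finset.sum_congr rfl fun i _ => by rw [ha i]; ring
  have hfin2 : ∑ j, Hm j * cj j
      = ∑ j, Hm j * ⟪h j, xp - x⟫ + ∑ j, Hm j * (⟪h j, x⟫ - b j) := by
    rw [← Finset.sum_add_distrib]
    refine Finset.sum_congr rfl fun j _ => ?_
    rw [hcj j, inner_sub_right]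
    ring
  have hfin3 : ∑ i, Q i * g i x + ∑ i, Q i * ⟪p i, μ - x⟫ ≤ ∑ i, Q i * g i μ := by
    rw [← Finset.sum_add_distrib]
    refine Finset.sum_le_sum fun i _ => ?_
    have h1 := hp i μ (hΔC hμ)
    have h2 := mul_le_mul_of_nonneg_left h1 (hQ i)
    linarith [h2]
  have hfin4 : ∑ j, Hm j * ⟪h j, μ - x⟫ + ∑ j, Hm j * (⟪h j, x⟫ - b j)
      = ∑ j, Hm j * (⟪h j, μ⟫ - b j) := by
    rw [← Finset.sum_add_distrib]
    refine Finset.sum_congr rfl fun j _ => ?_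
    rw [inner_sub_right]
    ring
  have hVf : V * ⟪pf, μ - x⟫ ≤ V * (f μ - f x) := by
    have h1 := hpf μ (hΔC hμ)
    exact mul_le_mul_of_nonneg_left (by linarith) hV.le
  have hsxp := hsx (xp - x)
  have hsμ := hsx (μ - x)
  linarith [hQdrift, hHdrift, hcore, hsxp, hsμ, hfin1, hfin2, hfin3, hfin4, hVf]
end
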